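/- For any measurable m : Ω → [0,1] with ‖m‖₁ > 0, sup over segmentations s of D_m(s) equals sup over v ∈ [0,1] of d_m(v) := 2∫₀^v (1 - F_m⁻¹(u)) du / (‖m‖₁ + v), where D_m(s) = 2∫ s·m dλ / (∫ s dλ + ‖m‖₁). -/

import Mathlib

open MeasureTheory Set

noncomputable section

/-- Normalized Lebesgue measure on the unit cube `[0,1]^n`. -/
def cubeMeasure (n : ℕ) : Measure (Fin n → ℝ) :=
  volume.restrict (Set.univ.pi fun _ => Set.Icc (0:ℝ) 1)

/-- A segmentation: a measurable `{0,1}`-valued function on the cube. -/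
def IsSeg {n : ℕ} (s : (Fin n → ℝ) → ℝ) : Prop :=
  Measurable s ∧ ∀ ω, s ω = 0 ∨ s ω = 1

/-- A marginal function: a measurable `[0,1]`-valued function on the cube. -/
def IsMarg {n : ℕ} (m : (Fin n → ℝ) → ℝ) : Prop :=
  Measurable m ∧ ∀ ω, m ω ∈ Set.Icc (0:ℝ) 1

/-- The volume `‖f‖₁ = ∫ f dλ` (for nonnegative `f`). -/
def vol {n : ℕ} (f : (Fin n → ℝ) → ℝ) : ℝ := ∫ ω, f ω ∂(cubeMeasure n)

/-- `F_m(t) = λ({ω : 1 - m(ω) ≤ t})`. -/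
def Fcdf {n : ℕ} (m : (Fin n → ℝ) → ℝ) (t : ℝ) : ℝ :=
  ((cubeMeasure n) {ω | 1 - m ω ≤ t}).toReal

/-- The left limit `F_m(t-) = λ({ω : 1 - m(ω) < t})`. -/
def FcdfMinus {n : ℕ} (m : (Fin n → ℝ) → ℝ) (t : ℝ) : ℝ :=
  ((cubeMeasure n) {ω | 1 - m ω < t}).toReal

/-- The generalized inverse (quantile function) `F_m⁻¹(v) = inf{t ∈ [0,1] : F_m(t) ≥ v}`. -/
def Finv {n : ℕ} (m : (Fin n → ℝ) → ℝ) (v : ℝ) : ℝ :=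
  sInf {t | t ∈ Set.Icc (0:ℝ) 1 ∧ v ≤ Fcdf m t}

/-- Dice. -/
def Dice {n : ℕ} (m s : (Fin n → ℝ) → ℝ) : ℝ :=
  2 * (∫ ω, s ω * m ω ∂(cubeMeasure n)) / (vol s + vol m)

/-- The function `d_m`. -/
def dFun {n : ℕ} (m : (Fin n → ℝ) → ℝ) (v : ℝ) : ℝ :=
  2 * (∫ u in (0:ℝ)..v, (1 - Finv m u)) / (vol m + v)

/-! ### auxiliary -/

instance cubeProb (n : ℕ) : IsProbabilityMeasure (cubeMeasure n) := by
  constructor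
  rw [cubeMeasure, Measure.restrict_apply MeasurableSet.univ, Set.univ_inter, volume_pi_pi]
  simp [Real.volume_Icc]

/-- G m t = μ {m > t} -/
def Gfn {n : ℕ} (m : (Fin n → ℝ) → ℝ) (t : ℝ) : ℝ :=
  ((cubeMeasure n) {ω | t < m ω}).toReal

section basic
variable {n : ℕ} {m : (Fin n → ℝ) → ℝ}

lemma cube_ne_top (A : Set (Fin n → ℝ)) : cubeMeasure n A ≠ ⊤ :=
  (measure_lt_top _ _).ne

lemma Fcdf_nonneg (t : ℝ) : 0 ≤ Fcdf m t := ENNReal.toReal_nonneg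

lemma Fcdf_mono : Monotone (Fcdf m) := fun a b hab =>
  ENNReal.toReal_mono (cube_ne_top _) (measure_mono fun ω h => le_trans h hab)

lemma Fcdf_le_one (t : ℝ) : Fcdf m t ≤ 1 := by
  have : (cubeMeasure n) {ω | 1 - m ω ≤ t} ≤ 1 := prob_le_one
  simpa [Fcdf] using ENNReal.toReal_mono (by simp) this

lemma Gfn_nonneg (t : ℝ) : 0 ≤ Gfn m t := ENNReal.toReal_nonneg

lemma Gfn_antitone : Antitone (Gfn m) := fun a b hab =>
  ENNReal.toReal_mono (cube_ne_top _) (measure_mono fun ω h => lt_of_le_of_lt hab h)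

lemma Gfn_eq_zero (hm : IsMarg m) {t : ℝ} (ht : 1 ≤ t) : Gfn m t = 0 := by
  have : {ω : Fin n → ℝ | t < m ω} = ∅ := by
    ext ω
    simp only [Set.mem_setOf_eq, Set.mem_empty_iff_false, iff_false, not_lt]
    exact le_trans (hm.2 ω).2 ht
  simp [Gfn, this]

lemma Fcdf_one (hm : IsMarg m) : Fcdf m 1 = 1 := by
  have : {ω : Fin n → ℝ | 1 - m ω ≤ 1} = Set.univ := by
    ext ω; simp only [Set.mem_setOf_eq, Set.mem_univ, iff_true]
    have := (hm.2 ω).1; linarith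
  rw [Fcdf, this, measure_univ, ENNReal.toReal_one]

lemma one_mem_Fset (hm : IsMarg m) {u : ℝ} (hu : u ≤ 1) :
    (1:ℝ) ∈ {t | t ∈ Set.Icc (0:ℝ) 1 ∧ u ≤ Fcdf m t} := by
  refine ⟨by norm_num, ?_⟩
  rw [Fcdf_one hm]; exact hu

lemma Fset_bddBelow (u : ℝ) : BddBelow {t | t ∈ Set.Icc (0:ℝ) 1 ∧ u ≤ Fcdf m t} :=
  ⟨0, fun t ht => ht.1.1⟩

lemma Finv_nonneg (u : ℝ) : 0 ≤ Finv m u :=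
  Real.sInf_nonneg (fun t ht => ht.1.1)

lemma Finv_le_one (hm : IsMarg m) {u : ℝ} (hu : u ≤ 1) : Finv m u ≤ 1 :=
  csInf_le (Fset_bddBelow u) (one_mem_Fset hm hu)

lemma Finv_le {u t : ℝ} (ht : t ∈ Set.Icc (0:ℝ) 1) (h : u ≤ Fcdf m t) : Finv m u ≤ t :=
  csInf_le (Fset_bddBelow u) ⟨ht, h⟩

lemma Finv_monoOn (hm : IsMarg m) {u u' : ℝ} (h : u ≤ u') (hu' : u' ≤ 1) :
    Finv m u ≤ Finv m u' :=
  csInf_le_csInf (Fset_bddBelow u) ⟨1, one_mem_Fset hm hu'⟩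
    (fun t ht => ⟨ht.1, le_trans h ht.2⟩)

/-- K2 -/
lemma le_Gfn_of_Finv_lt (hm : IsMarg m) {u t : ℝ} (hu0 : 0 < u) (hu1 : u ≤ 1)
    (h : Finv m u < 1 - t) : u ≤ Gfn m t := by
  obtain ⟨t', ht', hlt⟩ := exists_lt_of_csInf_lt ⟨1, one_mem_Fset hm hu1⟩ h
  calc u ≤ Fcdf m t' := ht'.2
    _ ≤ Gfn m t := by
      apply ENNReal.toReal_mono (cube_ne_top _)
      apply measure_mono
      intro ω hω
      simp only [Set.mem_setOf_eq] at *
      linarith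

/-- K1 -/
lemma Finv_lt_of_lt_Gfn (hm : IsMarg m) {u t : ℝ} (hu0 : 0 < u) (ht0 : 0 ≤ t)
    (h : u < Gfn m t) : Finv m u < 1 - t := by
  set sk : ℕ → Set (Fin n → ℝ) := fun k => {ω | 1 - m ω ≤ 1 - t - 1/(k+1)} with hsk
  have hU : {ω : Fin n → ℝ | t < m ω} = ⋃ k, sk k := by
    ext ω
    simp only [Set.mem_setOf_eq, Set.mem_iUnion, hsk]
    constructor
    · intro hω
      obtain ⟨k, hk⟩ := exists_nat_one_div_lt (show (0:ℝ) < (1-t) - (1 - m ω) by linarith)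
      exact ⟨k, by push_cast at hk ⊢; linarith⟩
    · rintro ⟨k, hk⟩
      have : (0:ℝ) < 1/(k+1) := by positivity
      linarith
  have hdir : Directed (· ⊆ ·) sk := by
    apply Monotone.directed_le
    intro k k' hkk' ω hω
    simp only [Set.mem_setOf_eq, hsk] at *
    have h1 : (1:ℝ)/(k'+1) ≤ 1/(k+1) := by
      apply one_div_le_one_div_of_le (by positivity)
      have : (k:ℝ) ≤ (k':ℝ) := Nat.cast_le.2 hkk'
      linarith
    linarith
  have hmu : (cubeMeasure n) {ω : Fin n → ℝ | t < m ω} = ⨆ k, (cubeMeasure n) (sk k) := by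
    rw [hU, Directed.measure_iUnion hdir]
  have h2 : ENNReal.ofReal u < ⨆ k, (cubeMeasure n) (sk k) := by
    rw [← hmu]
    exact (ENNReal.ofReal_lt_iff_lt_toReal hu0.le (cube_ne_top _)).2 h
  obtain ⟨k, hk⟩ := lt_iSup_iff.1 h2
  have hu : u ≤ Fcdf m (1 - t - 1/(k+1)) := by
    have := (ENNReal.ofReal_lt_iff_lt_toReal hu0.le (cube_ne_top _)).1 hk
    exact this.le
  have hδ : (0:ℝ) < 1/((k:ℝ)+1) := by positivity
  rcases lt_or_ge (1 - t - 1/((k:ℝ)+1)) 0 with hneg | hpos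
  · exfalso
    have : {ω : Fin n → ℝ | 1 - m ω ≤ 1 - t - 1/(k+1)} = ∅ := by
      ext ω
      simp only [Set.mem_setOf_eq, Set.mem_empty_iff_false, iff_false, not_le]
      have := (hm.2 ω).2; linarith
    rw [Fcdf, this] at hu
    simp at hu
    linarith
  · have hle : Finv m u ≤ 1 - t - 1/(k+1) :=
      Finv_le ⟨hpos, by linarith⟩ hu
    linarith

/-- K4 -/
lemma le_Finv_of_FcdfMinus_lt (hm : IsMarg m) {u t₀ : ℝ} (hu1 : u ≤ 1)
    (h : FcdfMinus m t₀ < u) : t₀ ≤ Finv m u := by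
  by_contra hc
  push_neg at hc
  obtain ⟨t', ht', hlt⟩ := exists_lt_of_csInf_lt ⟨1, one_mem_Fset hm hu1⟩ hc
  have : Fcdf m t' ≤ FcdfMinus m t₀ := by
    apply ENNReal.toReal_mono (cube_ne_top _)
    apply measure_mono
    intro ω hω
    simp only [Set.mem_setOf_eq] at *
    linarith
  linarith [ht'.2]

/-- K5: right continuity -/
lemma le_Fcdf_Finv (hm : IsMarg m) {v : ℝ} (hv : v ≤ 1) : v ≤ Fcdf m (Finv m v) := by
  rcases le_or_gt v 0 with hv0 | hv0
  · exact le_trans hv0 (Fcdf_nonneg _)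
  set sk : ℕ → Set (Fin n → ℝ) := fun k => {ω | 1 - m ω ≤ Finv m v + 1/(k+1)} with hsk
  have hI : {ω : Fin n → ℝ | 1 - m ω ≤ Finv m v} = ⋂ k, sk k := by
    ext ω
    simp only [Set.mem_setOf_eq, Set.mem_iInter, hsk]
    constructor
    · intro hω k
      have : (0:ℝ) < 1/((k:ℝ)+1) := by positivity
      linarith
    · intro hω
      by_contra hc
      push_neg at hc
      obtain ⟨k, hk⟩ := exists_nat_one_div_lt (show (0:ℝ) < (1 - m ω) - Finv m v by linarith)
      have := hω k
      push_cast at hk this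
      linarith
  have hmeas : ∀ k, NullMeasurableSet (sk k) (cubeMeasure n) := by
    intro k
    exact (measurableSet_le (measurable_const.sub hm.1) measurable_const).nullMeasurableSet
  have hdir : Directed (· ⊇ ·) sk := by
    apply Antitone.directed_ge
    intro k k' hkk' ω hω
    simp only [Set.mem_setOf_eq, hsk] at *
    have h1 : (1:ℝ)/(k'+1) ≤ 1/(k+1) := by
      apply one_div_le_one_div_of_le (by positivity)
      have : (k:ℝ) ≤ (k':ℝ) := Nat.cast_le.2 hkk'
      linarith
    linarith
  have hmu : (cubeMeasure n) {ω : Fin n → ℝ | 1 - m ω ≤ Finv m v}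
      = ⨅ k, (cubeMeasure n) (sk k) := by
    rw [hI, Directed.measure_iInter hmeas hdir ⟨0, cube_ne_top _⟩]
  have hle : ENNReal.ofReal v ≤ (cubeMeasure n) {ω : Fin n → ℝ | 1 - m ω ≤ Finv m v} := by
    rw [hmu]
    refine le_iInf (fun k => ?_)
    have hδ : (0:ℝ) < 1/((k:ℝ)+1) := by positivity
    obtain ⟨t', ht', hlt⟩ := exists_lt_of_csInf_lt ⟨1, one_mem_Fset hm hv⟩
      (show Finv m v < Finv m v + 1/(k+1) by linarith)
    refine ENNReal.ofReal_le_of_le_toReal ?_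
    calc v ≤ Fcdf m t' := ht'.2
      _ ≤ ((cubeMeasure n) (sk k)).toReal := by
        apply ENNReal.toReal_mono (cube_ne_top _)
        apply measure_mono
        intro ω hω
        simp only [Set.mem_setOf_eq, hsk] at *
        linarith
  calc v = (ENNReal.ofReal v).toReal := by rw [ENNReal.toReal_ofReal hv0.le]
    _ ≤ Fcdf m (Finv m v) := ENNReal.toReal_mono (cube_ne_top _) hle

/-- K6 -/
lemma FcdfMinus_Finv_le (hm : IsMarg m) {v : ℝ} (hv0 : 0 < v) (hv1 : v ≤ 1) :
    FcdfMinus m (Finv m v) ≤ v := by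
  set sk : ℕ → Set (Fin n → ℝ) := fun k => {ω | 1 - m ω ≤ Finv m v - 1/(k+1)} with hsk
  have hU : {ω : Fin n → ℝ | 1 - m ω < Finv m v} = ⋃ k, sk k := by
    ext ω
    simp only [Set.mem_setOf_eq, Set.mem_iUnion, hsk]
    constructor
    · intro hω
      obtain ⟨k, hk⟩ := exists_nat_one_div_lt (show (0:ℝ) < Finv m v - (1 - m ω) by linarith)
      exact ⟨k, by push_cast at hk ⊢; linarith⟩
    · rintro ⟨k, hk⟩
      have : (0:ℝ) < 1/((k:ℝ)+1) := by positivity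
      linarith
  have hdir : Directed (· ⊆ ·) sk := by
    apply Monotone.directed_le
    intro k k' hkk' ω hω
    simp only [Set.mem_setOf_eq, hsk] at *
    have h1 : (1:ℝ)/(k'+1) ≤ 1/(k+1) := by
      apply one_div_le_one_div_of_le (by positivity)
      have : (k:ℝ) ≤ (k':ℝ) := Nat.cast_le.2 hkk'
      linarith
    linarith
  have hmu : (cubeMeasure n) {ω : Fin n → ℝ | 1 - m ω < Finv m v}
      = ⨆ k, (cubeMeasure n) (sk k) := by
    rw [hU, Directed.measure_iUnion hdir]
  have hle : (cubeMeasure n) {ω : Fin n → ℝ | 1 - m ω < Finv m v} ≤ ENNReal.ofReal v := by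
    rw [hmu]
    refine iSup_le (fun k => ?_)
    have hδ : (0:ℝ) < 1/((k:ℝ)+1) := by positivity
    rcases lt_or_ge (Finv m v - 1/((k:ℝ)+1)) 0 with hneg | hpos
    · have : sk k = ∅ := by
        ext ω
        simp only [Set.mem_setOf_eq, Set.mem_empty_iff_false, iff_false, not_le, hsk]
        have := (hm.2 ω).2; linarith
      rw [this]; simp
    · have hnotin : ¬ (v ≤ Fcdf m (Finv m v - 1/(k+1))) := by
        intro hcon
        have := Finv_le ⟨hpos, by linarith [Finv_le_one hm hv1]⟩ hcon
        linarith
      push_neg at hnotin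
      exact le_of_lt ((ENNReal.lt_ofReal_iff_toReal_lt (cube_ne_top _)).2 hnotin)
  calc FcdfMinus m (Finv m v) ≤ (ENNReal.ofReal v).toReal :=
        ENNReal.toReal_mono ENNReal.ofReal_ne_top hle
    _ = v := ENNReal.toReal_ofReal hv0.le

end basic

section layer
variable {n : ℕ} {m : (Fin n → ℝ) → ℝ}

lemma integrable_marg (hm : IsMarg m) : Integrable m (cubeMeasure n) := by
  refine Integrable.mono' (integrable_const 1) hm.1.aestronglyMeasurable ?_
  refine Filter.Eventually.of_forall (fun ω => ?_)
  rw [Real.norm_eq_abs, abs_le]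
  exact ⟨by linarith [(hm.2 ω).1], (hm.2 ω).2⟩

lemma meas_slice (hm : IsMarg m) {v t : ℝ} (hv0 : 0 ≤ v) (hv1 : v ≤ 1) (ht : 0 < t) :
    volume ({u : ℝ | t < 1 - Finv m u} ∩ Set.Ioo 0 v) = ENNReal.ofReal (min v (Gfn m t)) := by
  set c := min v (Gfn m t) with hc
  apply le_antisymm
  · have hsub : {u : ℝ | t < 1 - Finv m u} ∩ Set.Ioo 0 v ⊆ Set.Ioc 0 c := by
      rintro u ⟨hS, hu0, huv⟩
      simp only [Set.mem_setOf_eq] at hS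
      have hle : u ≤ Gfn m t :=
        le_Gfn_of_Finv_lt hm hu0 (le_of_lt (lt_of_lt_of_le huv hv1)) (by linarith)
      exact ⟨hu0, le_min huv.le hle⟩
    calc volume _ ≤ volume (Set.Ioc 0 c) := measure_mono hsub
      _ = ENNReal.ofReal c := by rw [Real.volume_Ioc, sub_zero]
  · have hsub : Set.Ioo 0 c ⊆ {u : ℝ | t < 1 - Finv m u} ∩ Set.Ioo 0 v := by
      rintro u ⟨hu0, huc⟩
      have huv : u < v := lt_of_lt_of_le huc (min_le_left _ _)
      have huG : u < Gfn m t := lt_of_lt_of_le huc (min_le_right _ _)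
      have := Finv_lt_of_lt_Gfn hm hu0 ht.le huG
      exact ⟨by simp only [Set.mem_setOf_eq]; linarith, hu0, huv⟩
    calc ENNReal.ofReal c = volume (Set.Ioo 0 c) := by rw [Real.volume_Ioo, sub_zero]
      _ ≤ _ := measure_mono hsub

lemma N_eq (hm : IsMarg m) {v : ℝ} (hv0 : 0 ≤ v) (hv1 : v ≤ 1) :
    ∫ u in (0:ℝ)..v, (1 - Finv m u) = ∫ t in Set.Ioi (0:ℝ), min v (Gfn m t) := by
  have hmono : AntitoneOn (fun u => 1 - Finv m u) (Set.uIcc 0 v) := by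
    rw [Set.uIcc_of_le hv0]
    intro u hu u' hu' huu'
    have := Finv_monoOn hm huu' (le_trans hu'.2 hv1)
    simp only
    linarith
  have hii : IntervalIntegrable (fun u => 1 - Finv m u) volume 0 v :=
    hmono.intervalIntegrable
  have hio : IntegrableOn (fun u => 1 - Finv m u) (Set.Ioo 0 v) volume :=
    ((intervalIntegrable_iff_integrableOn_Ioc_of_le hv0).1 hii).mono_set Set.Ioo_subset_Ioc_self
  have hnn : 0 ≤ᵐ[volume.restrict (Set.Ioo 0 v)] fun u => 1 - Finv m u := by
    refine (ae_restrict_iff' measurableSet_Ioo).2 (Filter.Eventually.of_forall fun u hu => ?_)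
    have := Finv_le_one hm (le_of_lt (lt_of_lt_of_le hu.2 hv1))
    simp only [Pi.zero_apply]
    linarith
  rw [intervalIntegral.integral_of_le hv0, integral_Ioc_eq_integral_Ioo,
    hio.integral_eq_integral_meas_lt hnn]
  refine setIntegral_congr_fun measurableSet_Ioi (fun t ht => ?_)
  rw [measureReal_def, Measure.restrict_apply' measurableSet_Ioo]
  rw [show {a : ℝ | t < 1 - Finv m a} = {u : ℝ | t < 1 - Finv m u} from rfl]
  rw [meas_slice hm hv0 hv1 ht, ENNReal.toReal_ofReal (le_min hv0 (Gfn_nonneg t))]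

lemma layer_set (hm : IsMarg m) {A : Set (Fin n → ℝ)} (hA : MeasurableSet A) :
    ∫ ω in A, m ω ∂(cubeMeasure n)
      = ∫ t in Set.Ioi (0:ℝ), ((cubeMeasure n) ({ω | t < m ω} ∩ A)).toReal := by
  have hint : Integrable m ((cubeMeasure n).restrict A) := (integrable_marg hm).restrict
  have hnn : 0 ≤ᵐ[(cubeMeasure n).restrict A] m :=
    Filter.Eventually.of_forall (fun ω => (hm.2 ω).1)
  rw [hint.integral_eq_integral_meas_lt hnn]
  simp_rw [measureReal_def, Measure.restrict_apply' hA]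

lemma min_integrable (hm : IsMarg m) {v : ℝ} (hv0 : 0 ≤ v) :
    IntegrableOn (fun t => min v (Gfn m t)) (Set.Ioi (0:ℝ)) volume := by
  have h1 : IntegrableOn (fun t => min v (Gfn m t)) (Set.Ioc (0:ℝ) 1) volume := by
    refine (intervalIntegrable_iff_integrableOn_Ioc_of_le zero_le_one).1 ?_
    refine AntitoneOn.intervalIntegrable (fun t _ t' _ htt' => ?_)
    exact min_le_min le_rfl (Gfn_antitone htt')
  have h2 : IntegrableOn (fun t => min v (Gfn m t)) (Set.Ioi (1:ℝ)) volume := by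
    refine (integrableOn_congr_fun (g := fun _ => 0) ?_ measurableSet_Ioi).2 ?_
    · intro t ht
      simp only [Set.mem_Ioi] at ht
      show min v (Gfn m t) = 0
      rw [Gfn_eq_zero hm ht.le, min_eq_right hv0]
    · exact integrableOn_zero
  have := h1.union h2
  rwa [Set.Ioc_union_Ioi_eq_Ioi zero_le_one] at this

lemma HL (hm : IsMarg m) {A : Set (Fin n → ℝ)} (hA : MeasurableSet A) :
    ∫ ω in A, m ω ∂(cubeMeasure n)
      ≤ ∫ t in Set.Ioi (0:ℝ), min (((cubeMeasure n) A).toReal) (Gfn m t) := by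
  rw [layer_set hm hA]
  refine integral_mono_of_nonneg (Filter.Eventually.of_forall (fun t => ENNReal.toReal_nonneg))
    ((min_integrable hm ENNReal.toReal_nonneg)) (Filter.Eventually.of_forall (fun t => ?_))
  refine le_min ?_ ?_
  · exact ENNReal.toReal_mono (cube_ne_top _) (measure_mono Set.inter_subset_right)
  · exact ENNReal.toReal_mono (cube_ne_top _) (measure_mono Set.inter_subset_left)

end layer

section assembly
open scoped Classical
variable {n : ℕ} {m : (Fin n → ℝ) → ℝ}

lemma integrable_of_le_one {f : (Fin n → ℝ) → ℝ} (hf : Measurable f)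
    (h : ∀ ω, |f ω| ≤ 1) : Integrable f (cubeMeasure n) := by
  refine Integrable.mono' (integrable_const 1) hf.aestronglyMeasurable ?_
  exact Filter.Eventually.of_forall (fun ω => by rw [Real.norm_eq_abs]; exact h ω)

lemma level_eq (hm : IsMarg m) {t₀ : ℝ} {A : Set (Fin n → ℝ)} (hA : MeasurableSet A)
    (h1 : ∀ t : ℝ, t < 1 - t₀ → A ⊆ {ω | t < m ω})
    (h2 : ∀ t : ℝ, 1 - t₀ ≤ t → {ω | t < m ω} ⊆ A) :
    ∫ ω in A, m ω ∂(cubeMeasure n)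
      = ∫ t in Set.Ioi (0:ℝ), min (((cubeMeasure n) A).toReal) (Gfn m t) := by
  rw [layer_set hm hA]
  refine setIntegral_congr_fun measurableSet_Ioi (fun t _ => ?_)
  rcases lt_or_ge t (1 - t₀) with hcase | hcase
  · rw [Set.inter_eq_right.2 (h1 t hcase)]
    exact (min_eq_left (ENNReal.toReal_mono (cube_ne_top _)
      (measure_mono (h1 t hcase)) : ((cubeMeasure n) A).toReal ≤ Gfn m t)).symm
  · rw [Set.inter_eq_left.2 (h2 t hcase)]
    exact (min_eq_right (ENNReal.toReal_mono (cube_ne_top _)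
      (measure_mono (h2 t hcase)) : Gfn m t ≤ ((cubeMeasure n) A).toReal)).symm

lemma seg_of_set {A : Set (Fin n → ℝ)} (hA : MeasurableSet A) :
    IsSeg (fun ω => if ω ∈ A then (1:ℝ) else 0) := by
  refine ⟨Measurable.ite hA measurable_const measurable_const, fun ω => ?_⟩
  by_cases h : ω ∈ A <;> simp [h]

lemma dice_indicator (hm : IsMarg m) {A : Set (Fin n → ℝ)} (hA : MeasurableSet A)
    {s : (Fin n → ℝ) → ℝ} (hs : ∀ ω, s ω = if ω ∈ A then (1:ℝ) else 0) :
    vol s = ((cubeMeasure n) A).toReal ∧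
      ∫ ω, s ω * m ω ∂(cubeMeasure n) = ∫ ω in A, m ω ∂(cubeMeasure n) := by
  have hfun : s = A.indicator (fun _ => (1:ℝ)) := by
    funext ω; rw [hs ω]; by_cases h : ω ∈ A <;> simp [h]
  constructor
  · rw [vol, hfun, integral_indicator hA, setIntegral_const, smul_eq_mul, mul_one, measureReal_def]
  · have : (fun ω => s ω * m ω) = A.indicator m := by
      funext ω; rw [hs ω]; by_cases h : ω ∈ A <;> simp [h]
    rw [this, integral_indicator hA]

lemma meas_toReal_le_one (A : Set (Fin n → ℝ)) : ((cubeMeasure n) A).toReal ≤ 1 := by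
  have : (cubeMeasure n) A ≤ 1 := prob_le_one
  simpa using ENNReal.toReal_mono (by simp) this

lemma Finv_intervalIntegrable (hm : IsMarg m) {a b : ℝ} (ha : 0 ≤ a) (hab : a ≤ b)
    (hb : b ≤ 1) : IntervalIntegrable (fun u => 1 - Finv m u) volume a b := by
  refine AntitoneOn.intervalIntegrable ?_
  rw [Set.uIcc_of_le hab]
  intro u hu u' hu' huu'
  have := Finv_monoOn hm huu' (le_trans hu'.2 hb)
  simp only
  linarith

lemma N_nonneg (hm : IsMarg m) {v : ℝ} (hv0 : 0 ≤ v) (hv1 : v ≤ 1) :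
    0 ≤ ∫ u in (0:ℝ)..v, (1 - Finv m u) := by
  refine intervalIntegral.integral_nonneg hv0 (fun u hu => ?_)
  have := Finv_le_one hm (le_trans hu.2 hv1)
  linarith

lemma N_le_v (hm : IsMarg m) {v : ℝ} (hv0 : 0 ≤ v) (hv1 : v ≤ 1) :
    ∫ u in (0:ℝ)..v, (1 - Finv m u) ≤ v := by
  have h := intervalIntegral.integral_mono_on hv0 (Finv_intervalIntegrable hm le_rfl hv0 hv1)
    (intervalIntegrable_const (c := (1:ℝ))) (fun u _ => by linarith [Finv_nonneg (m := m) u])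
  simpa using h

lemma N_affine (hm : IsMarg m) {t₀ w : ℝ} (ht₀ : t₀ ∈ Set.Icc (0:ℝ) 1)
    (hw1 : FcdfMinus m t₀ ≤ w) (hw2 : w ≤ Fcdf m t₀) (hwle : w ≤ 1) :
    ∫ u in (0:ℝ)..w, (1 - Finv m u)
      = (∫ u in (0:ℝ)..(FcdfMinus m t₀), (1 - Finv m u)) + (1 - t₀) * (w - FcdfMinus m t₀) := by
  set v₁ := FcdfMinus m t₀ with hv₁
  have hv₁0 : 0 ≤ v₁ := ENNReal.toReal_nonneg
  have hv₁1 : v₁ ≤ 1 := le_trans hw1 hwle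
  have int1 : IntervalIntegrable (fun u => 1 - Finv m u) volume 0 v₁ :=
    Finv_intervalIntegrable hm le_rfl hv₁0 hv₁1
  have int2 : IntervalIntegrable (fun u => 1 - Finv m u) volume v₁ w :=
    Finv_intervalIntegrable hm hv₁0 hw1 hwle
  rw [← intervalIntegral.integral_add_adjacent_intervals int1 int2]
  congr 1
  rw [intervalIntegral.integral_of_le hw1]
  have heq : Set.EqOn (fun u => 1 - Finv m u) (fun _ => 1 - t₀) (Set.Ioc v₁ w) := by
    intro u hu
    have hle1 : Finv m u ≤ t₀ := Finv_le ht₀ (le_trans hu.2 hw2)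
    have hle2 : t₀ ≤ Finv m u :=
      le_Finv_of_FcdfMinus_lt hm (le_trans hu.2 hwle) hu.1
    simp only
    linarith
  rw [setIntegral_congr_fun measurableSet_Ioc heq, setIntegral_const, measureReal_def, Real.volume_Ioc,
    ENNReal.toReal_ofReal (by linarith), smul_eq_mul]
  ring

lemma frac_max {a b c v v₁ v₂ : ℝ} (h1 : 0 < c + v₁) (hv : v₁ ≤ v) (hv' : v ≤ v₂) :
    (a + b*v)/(c+v) ≤ max ((a+b*v₁)/(c+v₁)) ((a+b*v₂)/(c+v₂)) := by
  have h2 : 0 < c + v := by linarith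
  have h3 : 0 < c + v₂ := by linarith
  rcases le_or_gt a (b*c) with hc | hc
  · refine le_max_of_le_right ?_
    rw [div_le_div_iff₀ h2 h3]
    nlinarith [mul_nonneg (sub_nonneg.2 hc) (sub_nonneg.2 hv')]
  · refine le_max_of_le_left ?_
    rw [div_le_div_iff₀ h2 h1]
    nlinarith [mul_nonneg (sub_nonneg.2 hc.le) (sub_nonneg.2 hv)]

lemma dirA (hm : IsMarg m) (h0 : 0 < vol m) {s : (Fin n → ℝ) → ℝ} (hs : IsSeg s) :
    ∃ v ∈ Set.Icc (0:ℝ) 1, Dice m s ≤ dFun m v := by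
  set A := s ⁻¹' {1} with hAdef
  have hA : MeasurableSet A := hs.1 (measurableSet_singleton 1)
  have hsind : ∀ ω, s ω = if ω ∈ A then (1:ℝ) else 0 := by
    intro ω
    rcases hs.2 ω with h | h
    · rw [if_neg (by simp [hAdef, Set.mem_preimage, h])]; exact h
    · rw [if_pos (by simp [hAdef, Set.mem_preimage, h])]; exact h
  obtain ⟨hvol, hint⟩ := dice_indicator hm hA hsind
  set v := ((cubeMeasure n) A).toReal with hvdef
  have hv0 : 0 ≤ v := ENNReal.toReal_nonneg
  have hv1 : v ≤ 1 := meas_toReal_le_one A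
  refine ⟨v, ⟨hv0, hv1⟩, ?_⟩
  have hHL : ∫ ω, s ω * m ω ∂(cubeMeasure n) ≤ ∫ u in (0:ℝ)..v, (1 - Finv m u) := by
    rw [hint, N_eq hm hv0 hv1]
    exact HL hm hA
  have hNpos : 0 ≤ ∫ u in (0:ℝ)..v, (1 - Finv m u) := N_nonneg hm hv0 hv1
  rw [Dice, dFun, hvol]
  exact div_le_div₀ (by linarith) (by linarith) (by linarith)
    (le_of_eq (add_comm (vol m) v))

lemma dirB (hm : IsMarg m) (h0 : 0 < vol m) {v : ℝ} (hv : v ∈ Set.Icc (0:ℝ) 1) :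
    ∃ s, IsSeg s ∧ dFun m v ≤ Dice m s := by
  rcases eq_or_lt_of_le hv.1 with heq | hv0
  · refine ⟨fun _ => 0, ⟨measurable_const, fun ω => Or.inl rfl⟩, ?_⟩
    have h1 : dFun m v = 0 := by
      rw [← heq, dFun]
      simp
    have h2 : Dice m (fun _ : Fin n → ℝ => (0:ℝ)) = 0 := by
      rw [Dice]
      simp
    rw [h1, h2]
  · set t₀ := Finv m v with ht₀def
    have ht₀ : t₀ ∈ Set.Icc (0:ℝ) 1 := ⟨Finv_nonneg v, Finv_le_one hm hv.2⟩
    set v₁ := FcdfMinus m t₀ with hv₁def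
    set v₂ := Fcdf m t₀ with hv₂def
    have hv₁v : v₁ ≤ v := FcdfMinus_Finv_le hm hv0 hv.2
    have hvv₂ : v ≤ v₂ := le_Fcdf_Finv hm hv.2
    have hv₁0 : 0 ≤ v₁ := ENNReal.toReal_nonneg
    have hv₂1 : v₂ ≤ 1 := Fcdf_le_one t₀
    have hv₁1 : v₁ ≤ 1 := le_trans hv₁v hv.2
    have hv₂0 : 0 ≤ v₂ := ENNReal.toReal_nonneg
    set A₁ : Set (Fin n → ℝ) := {ω | 1 - m ω < t₀} with hA₁def
    set A₂ : Set (Fin n → ℝ) := {ω | 1 - m ω ≤ t₀} with hA₂def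
    have hA₁ : MeasurableSet A₁ := measurableSet_lt (measurable_const.sub hm.1) measurable_const
    have hA₂ : MeasurableSet A₂ := measurableSet_le (measurable_const.sub hm.1) measurable_const
    have hμ₁ : ((cubeMeasure n) A₁).toReal = v₁ := rfl
    have hμ₂ : ((cubeMeasure n) A₂).toReal = v₂ := rfl
    -- level set equalities
    have hlev₁ : ∫ ω in A₁, m ω ∂(cubeMeasure n) = ∫ u in (0:ℝ)..v₁, (1 - Finv m u) := by
      rw [N_eq hm hv₁0 hv₁1, ← hμ₁]
      refine level_eq hm (t₀ := t₀) hA₁ (fun t ht ω hω => ?_) (fun t ht ω hω => ?_)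
      · simp only [hA₁def, Set.mem_setOf_eq] at *
        linarith
      · simp only [hA₁def, Set.mem_setOf_eq] at *
        linarith
    have hlev₂ : ∫ ω in A₂, m ω ∂(cubeMeasure n) = ∫ u in (0:ℝ)..v₂, (1 - Finv m u) := by
      rw [N_eq hm hv₂0 hv₂1, ← hμ₂]
      refine level_eq hm (t₀ := t₀) hA₂ (fun t ht ω hω => ?_) (fun t ht ω hω => ?_)
      · simp only [hA₂def, Set.mem_setOf_eq] at *
        linarith
      · simp only [hA₂def, Set.mem_setOf_eq] at *
        linarith
    -- segmentations
    set s₁ : (Fin n → ℝ) → ℝ := fun ω => if ω ∈ A₁ then 1 else 0 with hs₁def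
    set s₂ : (Fin n → ℝ) → ℝ := fun ω => if ω ∈ A₂ then 1 else 0 with hs₂def
    have hseg₁ : IsSeg s₁ := seg_of_set hA₁
    have hseg₂ : IsSeg s₂ := seg_of_set hA₂
    obtain ⟨hvol₁, hint₁⟩ := dice_indicator hm hA₁ (fun ω => rfl)
    obtain ⟨hvol₂, hint₂⟩ := dice_indicator hm hA₂ (fun ω => rfl)
    have hDice₁ : Dice m s₁ = dFun m v₁ := by
      rw [Dice, dFun, hvol₁, hint₁, hlev₁, hμ₁, add_comm v₁ (vol m)]
    have hDice₂ : Dice m s₂ = dFun m v₂ := by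
      rw [Dice, dFun, hvol₂, hint₂, hlev₂, hμ₂, add_comm v₂ (vol m)]
    -- affine structure
    set N₁ := ∫ u in (0:ℝ)..v₁, (1 - Finv m u) with hN₁def
    set a := 2*(N₁ - (1-t₀)*v₁) with hadef
    set b := 2*(1-t₀) with hbdef
    have haff : ∀ w, v₁ ≤ w → w ≤ v₂ → w ≤ 1 → dFun m w = (a + b*w)/(vol m + w) := by
      intro w hw1 hw2 hw3
      rw [dFun, N_affine hm ht₀ hw1 hw2 hw3, ← hN₁def]
      congr 1
      ring
    have hfv : dFun m v = (a + b*v)/(vol m + v) := haff v hv₁v hvv₂ hv.2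
    have hfv₁ : dFun m v₁ = (a + b*v₁)/(vol m + v₁) := haff v₁ le_rfl (le_trans hv₁v hvv₂) hv₁1
    have hfv₂ : dFun m v₂ = (a + b*v₂)/(vol m + v₂) := haff v₂ (le_trans hv₁v hvv₂) le_rfl hv₂1
    have hmax : dFun m v ≤ max (dFun m v₁) (dFun m v₂) := by
      rw [hfv, hfv₁, hfv₂]
      exact frac_max (by linarith) hv₁v hvv₂
    rcases le_max_iff.1 hmax with h | h
    · exact ⟨s₁, hseg₁, by rwa [hDice₁]⟩
    · exact ⟨s₂, hseg₂, by rwa [hDice₂]⟩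

end assembly

theorem stmt8 {n : ℕ} {m : (Fin n → ℝ) → ℝ} (hm : IsMarg m) (h0 : 0 < vol m) :
    sSup {x : ℝ | ∃ s, IsSeg s ∧ x = Dice m s} =
      sSup {x : ℝ | ∃ v ∈ Set.Icc (0:ℝ) 1, x = dFun m v} := by
  set S₁ := {x : ℝ | ∃ s, IsSeg s ∧ x = Dice m s} with hS₁
  set S₂ := {x : ℝ | ∃ v ∈ Set.Icc (0:ℝ) 1, x = dFun m v} with hS₂
  have hne1 : S₁.Nonempty :=
    ⟨Dice m (fun _ => 0), ⟨fun _ => 0, ⟨measurable_const, fun _ => Or.inl rfl⟩, rfl⟩⟩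
  have hne2 : S₂.Nonempty := ⟨dFun m 0, ⟨0, ⟨le_rfl, zero_le_one⟩, rfl⟩⟩
  have hbdd1 : BddAbove S₁ := by
    refine ⟨2, ?_⟩
    rintro x ⟨s, hs, rfl⟩
    have hintsm : Integrable (fun ω => s ω * m ω) (cubeMeasure n) := by
      refine integrable_of_le_one (hs.1.mul hm.1) (fun ω => ?_)
      rcases hs.2 ω with h | h
      · rw [h, zero_mul, abs_zero]; norm_num
      · rw [h, one_mul, abs_le]
        exact ⟨by linarith [(hm.2 ω).1], (hm.2 ω).2⟩
    have h1 : ∫ ω, s ω * m ω ∂(cubeMeasure n) ≤ vol m := by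
      refine integral_mono hintsm (integrable_marg hm) (fun ω => ?_)
      rcases hs.2 ω with h | h
      · rw [h, zero_mul]; exact (hm.2 ω).1
      · rw [h, one_mul]
    have h2 : 0 ≤ vol s := integral_nonneg (fun ω => by rcases hs.2 ω with h | h <;> simp [h])
    rw [Dice, div_le_iff₀ (by linarith)]
    linarith
  have hbdd2 : BddAbove S₂ := by
    refine ⟨2 / vol m, ?_⟩
    rintro x ⟨v, hv, rfl⟩
    have hN0 : 0 ≤ ∫ u in (0:ℝ)..v, (1 - Finv m u) := N_nonneg hm hv.1 hv.2
    have hN1 : ∫ u in (0:ℝ)..v, (1 - Finv m u) ≤ 1 := le_trans (N_le_v hm hv.1 hv.2) hv.2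
    rw [dFun]
    exact div_le_div₀ (by norm_num) (by linarith) h0 (by linarith [hv.1])
  apply le_antisymm
  · refine csSup_le hne1 ?_
    rintro x ⟨s, hs, rfl⟩
    obtain ⟨v, hv, hle⟩ := dirA hm h0 hs
    exact le_trans hle (le_csSup hbdd2 ⟨v, hv, rfl⟩)
  · refine csSup_le hne2 ?_
    rintro x ⟨v, hv, rfl⟩
    obtain ⟨s, hs, hle⟩ := dirB hm h0 hv
    exact le_trans hle (le_csSup hbdd1 ⟨s, hs, rfl⟩)
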